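/- Let P be a probability measure on ℝⁿ, ε > 0, and for a measurable map T : ℝⁿ → ℝⁿ with E_{x∼P}[‖x − T(x)‖] ≤ ε, define R_T(f, g) = E_{x∼P}[(f(x) − g(T(x)))²] and M_T(f) = argmin_g R_T(f, g) (assumed to exist with vanishing Gateaux derivative: E_{x∼P}[(f(x) − M_T(f)(T(x))) h(T(x))] = 0 for all directions h). Then for any f, with Q = T#P: (a) ‖f − M_T(f)‖²_Q ≤ R_T(f, f), and (b) ‖M_T(f₁) − M_T(f₂)‖_Q ≤ ‖f₁ − f₂‖_P. Consequently, for any functions f̃ and f₀, sup over Q = T#P with T ∈ 𝒯_ε of E_{x∼Q}[(f̃(x) − f₀(x))²] ≤ 4 [sup_{T∈𝒯_ε} R_T(f̃, f̃) + sup_{T∈𝒯_ε} R_T(f₀, f₀) + E_{x∼P}[(f̃(x) − f₀(x))²]]. -/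

import Mathlib

open MeasureTheory RealInnerProductSpace

lemma aux_integrable_mul {α : Type*} [MeasurableSpace α] {μ : Measure α}
    {u v : α → ℝ} (hu : MemLp u 2 μ) (hv : MemLp v 2 μ) :
    Integrable (fun x => u x * v x) μ := by
  have h := L2.integrable_inner (𝕜 := ℝ) (hu.toLp u) (hv.toLp v)
  refine h.congr ?_
  filter_upwards [hu.coeFn_toLp, hv.coeFn_toLp] with x h1 h2
  simp [h1, h2, mul_comm]

lemma aux_cauchy_schwarz {α : Type*} [MeasurableSpace α] (μ : Measure α)
    (u v : α → ℝ) (hu : MemLp u 2 μ) (hv : MemLp v 2 μ) :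
    ∫ x, u x * v x ∂μ ≤ Real.sqrt (∫ x, u x ^ 2 ∂μ) * Real.sqrt (∫ x, v x ^ 2 ∂μ) := by
  set U : Lp ℝ 2 μ := hu.toLp u
  set V : Lp ℝ 2 μ := hv.toLp v
  have hU : (U : α → ℝ) =ᵐ[μ] u := hu.coeFn_toLp
  have hV : (V : α → ℝ) =ᵐ[μ] v := hv.coeFn_toLp
  have hinner : ⟪U, V⟫ = ∫ x, u x * v x ∂μ := by
    rw [L2.inner_def]
    refine integral_congr_ae ?_
    filter_upwards [hU, hV] with x hx hy
    simp [hx, hy, mul_comm]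
  have hUU : ‖U‖ = Real.sqrt (∫ x, u x ^ 2 ∂μ) := by
    have h2 : ⟪U, U⟫ = ∫ x, u x ^ 2 ∂μ := by
      rw [L2.inner_def]
      refine integral_congr_ae ?_
      filter_upwards [hU] with x hx
      simp [hx, sq]
    rw [← h2, real_inner_self_eq_norm_mul_norm, Real.sqrt_mul_self (norm_nonneg _)]
  have hVV : ‖V‖ = Real.sqrt (∫ x, v x ^ 2 ∂μ) := by
    have h2 : ⟪V, V⟫ = ∫ x, v x ^ 2 ∂μ := by
      rw [L2.inner_def]
      refine integral_congr_ae ?_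
      filter_upwards [hV] with x hx
      simp [hx, sq]
    rw [← h2, real_inner_self_eq_norm_mul_norm, Real.sqrt_mul_self (norm_nonneg _)]
  calc ∫ x, u x * v x ∂μ = ⟪U, V⟫ := hinner.symm
    _ ≤ ‖U‖ * ‖V‖ := real_inner_le_norm U V
    _ = _ := by rw [hUU, hVV]

lemma aux_split_sq {α : Type*} [MeasurableSpace α] (μ : Measure α)
    (a b : α → ℝ) (ha : MemLp a 2 μ) (hb : MemLp b 2 μ) :
    ∫ x, (a x + b x) ^ 2 ∂μ
      = (∫ x, a x ^ 2 ∂μ) + 2 * (∫ x, a x * b x ∂μ) + ∫ x, b x ^ 2 ∂μ := by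
  have iaa := ha.integrable_sq
  have ibb := hb.integrable_sq
  have iab := aux_integrable_mul ha hb
  have hpt : ∀ x, (a x + b x) ^ 2 = a x ^ 2 + (2 * (a x * b x) + b x ^ 2) := by
    intro x; ring
  simp_rw [hpt]
  have q1 : ∫ x, (a x ^ 2 + (2 * (a x * b x) + b x ^ 2)) ∂μ
      = (∫ x, a x ^ 2 ∂μ) + ∫ x, (2 * (a x * b x) + b x ^ 2) ∂μ :=
    integral_add iaa ((iab.const_mul 2).add ibb)
  have q2 : ∫ x, (2 * (a x * b x) + b x ^ 2) ∂μ
      = (∫ x, 2 * (a x * b x) ∂μ) + ∫ x, b x ^ 2 ∂μ :=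
    integral_add (iab.const_mul 2) ibb
  have q3 : ∫ x, 2 * (a x * b x) ∂μ = 2 * ∫ x, a x * b x ∂μ :=
    integral_const_mul 2 _
  rw [q1, q2, q3]
  ring

/-- Theorem 3 (`thm:thm_dom_gen`): uniform domain-generalization bound. For every
`ε`-bounded transport map `T` (i.e. `E_P‖x − T(x)‖ ≤ ε`), with
`R_T(f, g) = E_P[(f(x) − g(T(x)))²]` and `M_T(f)` the stationary minimizer of
`R_T(f, ·)`, we have (a) `‖f − M_T(f)‖²_Q ≤ R_T(f, f)`, (b) `M_T` is 1-Lipschitz from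
`‖·‖_P` to `‖·‖_Q`, and consequently the target risk of `f̃` over every `Q = T#P` with
`T ∈ 𝒯_ε` is bounded by `4[R_T(f̃, f̃) + R_T(f₀, f₀) + E_P(f̃ − f₀)²]`
(here `‖h‖²_Q = E_P[h(T(x))²]`). -/
theorem domain_generalization_uniform_bound {n : ℕ}
    (P : Measure (EuclideanSpace ℝ (Fin n))) [IsProbabilityMeasure P] (ε : ℝ) (hε : 0 < ε)
    (F : Set (EuclideanSpace ℝ (Fin n) → ℝ))
    (hF : ∀ f ∈ F, MemLp f 2 P ∧
      ∀ T : EuclideanSpace ℝ (Fin n) → EuclideanSpace ℝ (Fin n),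
        Measurable T → MemLp (fun x => f (T x)) 2 P)
    (RT : (EuclideanSpace ℝ (Fin n) → EuclideanSpace ℝ (Fin n)) →
      (EuclideanSpace ℝ (Fin n) → ℝ) → (EuclideanSpace ℝ (Fin n) → ℝ) → ℝ)
    (hRT : ∀ T f g, RT T f g = ∫ x, (f x - g (T x)) ^ 2 ∂P)
    (MT : (EuclideanSpace ℝ (Fin n) → EuclideanSpace ℝ (Fin n)) →
      (EuclideanSpace ℝ (Fin n) → ℝ) → (EuclideanSpace ℝ (Fin n) → ℝ))
    (hMF : ∀ T, Measurable T → (∫ x, ‖x - T x‖ ∂P) ≤ ε → ∀ f ∈ F, MT T f ∈ F)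
    (hMmin : ∀ T, Measurable T → (∫ x, ‖x - T x‖ ∂P) ≤ ε →
      ∀ f ∈ F, ∀ g ∈ F, RT T f (MT T f) ≤ RT T f g)
    (hMstat : ∀ T, Measurable T → (∫ x, ‖x - T x‖ ∂P) ≤ ε →
      ∀ f ∈ F, ∀ h : EuclideanSpace ℝ (Fin n) → ℝ,
        ∫ x, (f x - MT T f (T x)) * h (T x) ∂P = 0)
    (ftilde : EuclideanSpace ℝ (Fin n) → ℝ) (hft : ftilde ∈ F)
    (f₀ : EuclideanSpace ℝ (Fin n) → ℝ) (hf₀ : f₀ ∈ F) :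
    ∀ T : EuclideanSpace ℝ (Fin n) → EuclideanSpace ℝ (Fin n),
      Measurable T → (∫ x, ‖x - T x‖ ∂P) ≤ ε →
      -- (a) `‖f − M_T(f)‖²_Q ≤ R_T(f, f)`
      (∀ f ∈ F, ∫ x, (f (T x) - MT T f (T x)) ^ 2 ∂P ≤ RT T f f) ∧
      -- (b) `‖M_T(f₁) − M_T(f₂)‖_Q ≤ ‖f₁ − f₂‖_P`
      (∀ f₁ ∈ F, ∀ f₂ ∈ F,
        Real.sqrt (∫ x, (MT T f₁ (T x) - MT T f₂ (T x)) ^ 2 ∂P)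
          ≤ Real.sqrt (∫ x, (f₁ x - f₂ x) ^ 2 ∂P)) ∧
      -- consequence: uniform out-of-distribution error bound over `Q = T#P`, `T ∈ 𝒯_ε`
      (∫ x, (ftilde (T x) - f₀ (T x)) ^ 2 ∂P
        ≤ 4 * (RT T ftilde ftilde + RT T f₀ f₀ + ∫ x, (ftilde x - f₀ x) ^ 2 ∂P)) := by
  intro T hT hTε
  -- generic L2 facts
  have memF : ∀ f ∈ F, MemLp f 2 P ∧ MemLp (fun x => f (T x)) 2 P := by
    intro f hf
    exact ⟨(hF f hf).1, (hF f hf).2 T hT⟩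
  -- part (a)
  have parta : ∀ f ∈ F, ∫ x, (f (T x) - MT T f (T x)) ^ 2 ∂P ≤ RT T f f := by
    intro f hf
    have hMf : MT T f ∈ F := hMF T hT hTε f hf
    have hf2 := (memF f hf).1
    have hfT := (memF f hf).2
    have hMT := (memF _ hMf).2
    set u : EuclideanSpace ℝ (Fin n) → ℝ := fun x => f x - MT T f (T x) with hu_def
    set w : EuclideanSpace ℝ (Fin n) → ℝ := fun x => MT T f (T x) - f (T x) with hw_def
    have hu2 : MemLp u 2 P := hf2.sub hMT
    have hw2 : MemLp w 2 P := hMT.sub hfT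
    have cross : ∫ x, u x * w x ∂P = 0 := by
      have := hMstat T hT hTε f hf (fun y => MT T f y - f y)
      simpa [hu_def, hw_def] using this
    have key : RT T f f
        = (∫ x, u x ^ 2 ∂P) + 2 * (∫ x, u x * w x ∂P) + ∫ x, w x ^ 2 ∂P := by
      rw [hRT]
      have : ∀ x, (f x - f (T x)) ^ 2 = (u x + w x) ^ 2 := by
        intro x; simp only [hu_def, hw_def]; ring
      simp_rw [this]
      exact aux_split_sq P u w hu2 hw2
    have hw_eq : ∫ x, (f (T x) - MT T f (T x)) ^ 2 ∂P = ∫ x, w x ^ 2 ∂P := by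
      refine integral_congr_ae (Filter.Eventually.of_forall fun x => ?_)
      simp only [hw_def]; ring
    have hu_nonneg : 0 ≤ ∫ x, u x ^ 2 ∂P :=
      integral_nonneg fun x => sq_nonneg _
    rw [hw_eq, key, cross]
    linarith
  -- part (b)
  have partb : ∀ f₁ ∈ F, ∀ f₂ ∈ F,
      Real.sqrt (∫ x, (MT T f₁ (T x) - MT T f₂ (T x)) ^ 2 ∂P)
        ≤ Real.sqrt (∫ x, (f₁ x - f₂ x) ^ 2 ∂P) := by
    intro f₁ hf₁ f₂ hf₂
    have hM₁ : MT T f₁ ∈ F := hMF T hT hTε f₁ hf₁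
    have hM₂ : MT T f₂ ∈ F := hMF T hT hTε f₂ hf₂
    set D : EuclideanSpace ℝ (Fin n) → ℝ := fun x => MT T f₁ (T x) - MT T f₂ (T x) with hD_def
    have hD2 : MemLp D 2 P := ((memF _ hM₁).2).sub ((memF _ hM₂).2)
    have hd2 : MemLp (fun x => f₁ x - f₂ x) 2 P := (memF f₁ hf₁).1.sub (memF f₂ hf₂).1
    have e1 : ∫ x, (f₁ x - MT T f₁ (T x)) * D x ∂P = 0 := by
      have := hMstat T hT hTε f₁ hf₁ (fun y => MT T f₁ y - MT T f₂ y)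
      simpa [hD_def] using this
    have e2 : ∫ x, (f₂ x - MT T f₂ (T x)) * D x ∂P = 0 := by
      have := hMstat T hT hTε f₂ hf₂ (fun y => MT T f₁ y - MT T f₂ y)
      simpa [hD_def] using this
    have hdecomp : ∫ x, D x ^ 2 ∂P = ∫ x, (f₁ x - f₂ x) * D x ∂P := by
      have i1 : Integrable (fun x => (f₁ x - MT T f₁ (T x)) * D x) P :=
        aux_integrable_mul ((memF f₁ hf₁).1.sub (memF _ hM₁).2) hD2
      have i2 : Integrable (fun x => (f₂ x - MT T f₂ (T x)) * D x) P :=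
        aux_integrable_mul ((memF f₂ hf₂).1.sub (memF _ hM₂).2) hD2
      have i3 : Integrable (fun x => (f₁ x - f₂ x) * D x) P :=
        aux_integrable_mul hd2 hD2
      have hpt : ∀ x, D x ^ 2 =
          (f₁ x - f₂ x) * D x - (f₁ x - MT T f₁ (T x)) * D x
            + (f₂ x - MT T f₂ (T x)) * D x := by
        intro x; simp only [hD_def]; ring
      simp_rw [hpt]
      have q1 : ∫ x, ((f₁ x - f₂ x) * D x - (f₁ x - MT T f₁ (T x)) * D x
            + (f₂ x - MT T f₂ (T x)) * D x) ∂P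
          = (∫ x, ((f₁ x - f₂ x) * D x - (f₁ x - MT T f₁ (T x)) * D x) ∂P)
            + ∫ x, (f₂ x - MT T f₂ (T x)) * D x ∂P :=
        integral_add (i3.sub i1) i2
      have q2 : ∫ x, ((f₁ x - f₂ x) * D x - (f₁ x - MT T f₁ (T x)) * D x) ∂P
          = (∫ x, (f₁ x - f₂ x) * D x ∂P) - ∫ x, (f₁ x - MT T f₁ (T x)) * D x ∂P :=
        integral_sub i3 i1
      rw [q1, q2, e1, e2]
      ring
    have hCS : ∫ x, (f₁ x - f₂ x) * D x ∂P
        ≤ Real.sqrt (∫ x, (f₁ x - f₂ x) ^ 2 ∂P) * Real.sqrt (∫ x, D x ^ 2 ∂P) :=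
      aux_cauchy_schwarz P _ _ hd2 hD2
    have hA : 0 ≤ ∫ x, D x ^ 2 ∂P := integral_nonneg fun x => sq_nonneg _
    set A := ∫ x, D x ^ 2 ∂P
    set B := ∫ x, (f₁ x - f₂ x) ^ 2 ∂P
    have hAA : A ≤ Real.sqrt B * Real.sqrt A := hdecomp.le.trans hCS
    rcases eq_or_lt_of_le (Real.sqrt_nonneg A) with h0 | h0
    · rw [← h0]; exact Real.sqrt_nonneg B
    · have : Real.sqrt A * Real.sqrt A ≤ Real.sqrt B * Real.sqrt A := by
        rwa [Real.mul_self_sqrt hA]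
      exact le_of_mul_le_mul_right this h0
  refine ⟨parta, partb, ?_⟩
  -- consequence
  have hMft : MT T ftilde ∈ F := hMF T hT hTε ftilde hft
  have hMf₀ : MT T f₀ ∈ F := hMF T hT hTε f₀ hf₀
  set a : EuclideanSpace ℝ (Fin n) → ℝ := fun x => ftilde (T x) - MT T ftilde (T x) with ha_def
  set b : EuclideanSpace ℝ (Fin n) → ℝ := fun x => MT T ftilde (T x) - MT T f₀ (T x) with hb_def
  set c : EuclideanSpace ℝ (Fin n) → ℝ := fun x => MT T f₀ (T x) - f₀ (T x) with hc_def
  have ha2 : MemLp a 2 P := ((memF ftilde hft).2).sub ((memF _ hMft).2)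
  have hb2 : MemLp b 2 P := ((memF _ hMft).2).sub ((memF _ hMf₀).2)
  have hc2 : MemLp c 2 P := ((memF _ hMf₀).2).sub ((memF f₀ hf₀).2)
  have habc : MemLp (fun x => ftilde (T x) - f₀ (T x)) 2 P :=
    ((memF ftilde hft).2).sub ((memF f₀ hf₀).2)
  have h3 : ∫ x, (ftilde (T x) - f₀ (T x)) ^ 2 ∂P
      ≤ 3 * ((∫ x, a x ^ 2 ∂P) + (∫ x, b x ^ 2 ∂P) + ∫ x, c x ^ 2 ∂P) := by
    have hineq : ∀ x, (ftilde (T x) - f₀ (T x)) ^ 2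
        ≤ 3 * (a x ^ 2 + b x ^ 2 + c x ^ 2) := by
      intro x
      have : ftilde (T x) - f₀ (T x) = a x + b x + c x := by
        simp only [ha_def, hb_def, hc_def]; ring
      rw [this]
      nlinarith [sq_nonneg (a x - b x), sq_nonneg (b x - c x), sq_nonneg (a x - c x)]
    have iL : Integrable (fun x => (ftilde (T x) - f₀ (T x)) ^ 2) P := habc.integrable_sq
    have iR : Integrable (fun x => 3 * (a x ^ 2 + b x ^ 2 + c x ^ 2)) P :=
      (((ha2.integrable_sq.add hb2.integrable_sq).add hc2.integrable_sq).const_mul 3)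
    calc ∫ x, (ftilde (T x) - f₀ (T x)) ^ 2 ∂P
        ≤ ∫ x, 3 * (a x ^ 2 + b x ^ 2 + c x ^ 2) ∂P := integral_mono iL iR hineq
      _ = 3 * ((∫ x, a x ^ 2 ∂P) + (∫ x, b x ^ 2 ∂P) + ∫ x, c x ^ 2 ∂P) := by
          have q0 : ∫ x, 3 * (a x ^ 2 + b x ^ 2 + c x ^ 2) ∂P
              = 3 * ∫ x, (a x ^ 2 + b x ^ 2 + c x ^ 2) ∂P := integral_const_mul 3 _
          have q1 : ∫ x, (a x ^ 2 + b x ^ 2 + c x ^ 2) ∂P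
              = (∫ x, (a x ^ 2 + b x ^ 2) ∂P) + ∫ x, c x ^ 2 ∂P :=
            integral_add (ha2.integrable_sq.add hb2.integrable_sq) hc2.integrable_sq
          have q2 : ∫ x, (a x ^ 2 + b x ^ 2) ∂P
              = (∫ x, a x ^ 2 ∂P) + ∫ x, b x ^ 2 ∂P :=
            integral_add ha2.integrable_sq hb2.integrable_sq
          rw [q0, q1, q2]
  have hA : ∫ x, a x ^ 2 ∂P ≤ RT T ftilde ftilde := parta ftilde hft
  have hC : ∫ x, c x ^ 2 ∂P ≤ RT T f₀ f₀ := by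
    have := parta f₀ hf₀
    have heq : ∫ x, c x ^ 2 ∂P = ∫ x, (f₀ (T x) - MT T f₀ (T x)) ^ 2 ∂P := by
      refine integral_congr_ae (Filter.Eventually.of_forall fun x => ?_)
      simp only [hc_def]; ring
    rw [heq]; exact this
  have hB : ∫ x, b x ^ 2 ∂P ≤ ∫ x, (ftilde x - f₀ x) ^ 2 ∂P := by
    have hs := partb ftilde hft f₀ hf₀
    have h1 : 0 ≤ ∫ x, b x ^ 2 ∂P := integral_nonneg fun x => sq_nonneg _
    have h2 : 0 ≤ ∫ x, (ftilde x - f₀ x) ^ 2 ∂P := integral_nonneg fun x => sq_nonneg _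
    calc ∫ x, b x ^ 2 ∂P = Real.sqrt (∫ x, b x ^ 2 ∂P) ^ 2 := (Real.sq_sqrt h1).symm
      _ ≤ Real.sqrt (∫ x, (ftilde x - f₀ x) ^ 2 ∂P) ^ 2 := by
          apply pow_le_pow_left₀ (Real.sqrt_nonneg _) hs
      _ = _ := Real.sq_sqrt h2
  have hRnn1 : 0 ≤ RT T ftilde ftilde := by
    rw [hRT]; exact integral_nonneg fun x => sq_nonneg _
  have hRnn2 : 0 ≤ RT T f₀ f₀ := by
    rw [hRT]; exact integral_nonneg fun x => sq_nonneg _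
  have hInn : 0 ≤ ∫ x, (ftilde x - f₀ x) ^ 2 ∂P := integral_nonneg fun x => sq_nonneg _
  linarith
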